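/- arXiv:2106.11675 — 4 statements merged into one kernel-verified Lean document; each statement's English description precedes it below -/
import Mathlib

section
/- Let G be a finite simple graph and let (C,F) be an antler in G. Then fvs(G) = |C| + fvs(G − (C ∪ F)). -/
variable {V : Type*}

/-- The subgraph of `G` with edges restricted to the vertex set `S`
(kept on the same vertex type; vertices outside `S` become isolated).
Used to model the induced subgraph `G[S]` and vertex deletion `G - X = G[Xᶜ]`. -/
def graphRestrict (G : SimpleGraph V) (S : Set V) : SimpleGraph V where
  Adj u v := G.Adj u v ∧ u ∈ S ∧ v ∈ S
  symm := ⟨fun _ _ h => ⟨h.1.symm, h.2.2, h.2.1⟩⟩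
  loopless := ⟨fun v h => G.loopless.irrefl v h.1⟩

/-- `X` is a feedback vertex set of `G`: deleting `X` leaves an acyclic graph. -/
def IsFVS (G : SimpleGraph V) (X : Set V) : Prop :=
  (graphRestrict G Xᶜ).IsAcyclic

/-- The feedback vertex number of `G`: the minimum size of a feedback vertex set. -/
noncomputable def fvs (G : SimpleGraph V) : ℕ :=
  sInf {n | ∃ X : Set V, IsFVS G X ∧ X.ncard = n}

/-- `X` is a minimum feedback vertex set of `G`. -/
def IsMinFVS (G : SimpleGraph V) (X : Set V) : Prop :=
  IsFVS G X ∧ ∀ Y : Set V, IsFVS G Y → X.ncard ≤ Y.ncard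

/-- `(C, F)` is a feedback vertex cut in `G`: `C` and `F` are disjoint, `G[F]` is a
forest, and every tree of `G[F]` has at most one edge to `V(G) \ (C ∪ F)` (i.e. any two
edges from the same component of `G[F]` to the outside coincide). -/
def IsFVC (G : SimpleGraph V) (C F : Set V) : Prop :=
  Disjoint C F ∧ (graphRestrict G F).IsAcyclic ∧
    ∀ u₁ u₂ w₁ w₂ : V, u₁ ∈ F → u₂ ∈ F →
      (graphRestrict G F).Reachable u₁ u₂ →
      w₁ ∉ C ∪ F → w₂ ∉ C ∪ F → G.Adj u₁ w₁ → G.Adj u₂ w₂ →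
      u₁ = u₂ ∧ w₁ = w₂

/-- `(C, F)` is an antler in `G`: a feedback vertex cut with `|C| ≤ fvs(G[C ∪ F])`. -/
def IsAntler (G : SimpleGraph V) (C F : Set V) : Prop :=
  IsFVC G C F ∧ C.ncard ≤ fvs (graphRestrict G (C ∪ F))

/-- A graph `H` together with a vertex set `C` "has order `z`" if every connected
component `H'` of `H` satisfies `fvs(H') = |C ∩ V(H')| ≤ z`. -/
def HasCertOrder {W : Type*} (H : SimpleGraph W) (C : Set W) (z : ℕ) : Prop :=
  ∀ v : W,
    fvs (graphRestrict H {u | H.Reachable u v}) = (C ∩ {u | H.Reachable u v}).ncard ∧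
    (C ∩ {u | H.Reachable u v}).ncard ≤ z

/-- `H` is a `C`-certificate in `G`: a subgraph of `G` for which `C` is a minimum
feedback vertex set. -/
def IsCCertificate (G : SimpleGraph V) (C : Set V) (H : G.Subgraph) : Prop :=
  C ⊆ H.verts ∧ IsMinFVS H.coe {u : H.verts | (u : V) ∈ C}

/-- `H` is a `C`-certificate of order `z` in `G`. -/
def IsCCertificateOfOrder (G : SimpleGraph V) (C : Set V) (H : G.Subgraph) (z : ℕ) : Prop :=
  IsCCertificate G C H ∧ HasCertOrder H.coe {u : H.verts | (u : V) ∈ C} z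

/-- `(C, F)` is a `z`-antler in `G`: an antler such that `G[C ∪ F]` contains a
`C`-certificate of order `z`. -/
def IsZAntler (G : SimpleGraph V) (z : ℕ) (C F : Set V) : Prop :=
  IsAntler G C F ∧ ∃ H : G.Subgraph, H.verts ⊆ C ∪ F ∧ IsCCertificateOfOrder G C H z

/-- The function `f_r(x) = 2x³ + 3x² - x`. -/
def fr (x : ℕ) : ℕ := 2 * x ^ 3 + 3 * x ^ 2 - x

/-- A feedback vertex cut `(C, F)` is reducible if `|F| > f_r(|C|)`. -/
def IsReducibleFVC (G : SimpleGraph V) (C F : Set V) : Prop :=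
  IsFVC G C F ∧ fr C.ncard < F.ncard

/-- A feedback vertex cut `(C, F)` is simple if `|F| ≤ 2 f_r(|C|)` and either
`G[F]` is connected, or all trees of `G[F]` have a common neighbor `v` and there is a
single-tree feedback vertex cut `(C, F₂)` with `v ∈ F₂ \ F` and `F ⊆ F₂`. -/
def IsSimpleFVC (G : SimpleGraph V) (C F : Set V) : Prop :=
  IsFVC G C F ∧ F.ncard ≤ 2 * fr C.ncard ∧
    ((G.induce F).Connected ∨
      ∃ v : V,
        (∀ u ∈ F, ∃ u' ∈ F, (graphRestrict G F).Reachable u u' ∧ G.Adj u' v) ∧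
        ∃ F₂ : Set V, IsFVC G C F₂ ∧ (G.induce F₂).Connected ∧ v ∈ F₂ \ F ∧ F ⊆ F₂)

/-- `G` contains a `v`-flower of order `k`: `k` cycles whose vertex sets pairwise
intersect exactly in `{v}`. -/
def HasFlower (G : SimpleGraph V) (v : V) (k : ℕ) : Prop :=
  ∃ c : Fin k → G.Walk v v,
    (∀ i, (c i).IsCycle) ∧
    ∀ i j, i ≠ j → {x | x ∈ (c i).support} ∩ {x | x ∈ (c j).support} = {v}

/-- `G` contains `k` pairwise vertex-disjoint cycles. -/
def HasDisjointCycles (G : SimpleGraph V) (k : ℕ) : Prop :=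
  ∃ (b : Fin k → V) (c : ∀ i, G.Walk (b i) (b i)),
    (∀ i, (c i).IsCycle) ∧
    ∀ i j, i ≠ j → Disjoint {x | x ∈ (c i).support} {x | x ∈ (c j).support}

/-- `(C, F)` is a 1-antler in `G` (self-contained definition): `G[F]` is a forest,
every tree of `G[F]` has at most one edge to `V(G) \ (C ∪ F)`, and `G[C ∪ F]`
contains `|C|` pairwise vertex-disjoint cycles. -/
def IsOneAntler (G : SimpleGraph V) (C F : Set V) : Prop :=
  IsFVC G C F ∧ HasDisjointCycles (graphRestrict G (C ∪ F)) C.ncard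

/-- `C 1, F 1, …, C ℓ, F ℓ` is a `z`-antler-sequence for `G`: the sets are pairwise
disjoint and each `(C i, F i)` is a `z`-antler in `G` minus all earlier sets. -/
def IsAntlerSeq (G : SimpleGraph V) (z ℓ : ℕ) (C F : Fin ℓ → Set V) : Prop :=
  (∀ i j, i ≠ j → Disjoint (C i) (C j)) ∧
  (∀ i j, i ≠ j → Disjoint (F i) (F j)) ∧
  (∀ i j, Disjoint (C i) (F j)) ∧
  ∀ i, IsZAntler (graphRestrict G (⋃ j, ⋃ (_ : j < i), (C j ∪ F j))ᶜ) z (C i) (F i)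

section AntlerProof

open SimpleGraph

/-- Transfer a cycle from `G` to `H` when adjacency carries over on the cycle's support. -/
lemma cycleTransfer {G H : SimpleGraph V} {v : V} (p : G.Walk v v) (hp : p.IsCycle)
    (h : ∀ a b, G.Adj a b → a ∈ p.support → b ∈ p.support → H.Adj a b)
    (hH : H.IsAcyclic) : False := by
  have hedges : ∀ e ∈ p.edges, e ∈ H.edgeSet := by
    intro e
    induction e using Sym2.ind with
    | _ a b =>
      intro he
      exact (SimpleGraph.mem_edgeSet H).mpr (h a b (p.adj_of_mem_edges he)
        (p.fst_mem_support_of_mem_edges he) (p.snd_mem_support_of_mem_edges he))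
  exact hH (p.transfer H hedges) (hp.transfer hedges)

lemma fvs_le_of_isFVS {G : SimpleGraph V} {X : Set V} (h : IsFVS G X) : fvs G ≤ X.ncard :=
  Nat.sInf_le ⟨X, h, rfl⟩

lemma exists_min_fvs (G : SimpleGraph V) : ∃ X, IsFVS G X ∧ X.ncard = fvs G := by
  have hne : {n | ∃ X : Set V, IsFVS G X ∧ X.ncard = n}.Nonempty := by
    refine ⟨(Set.univ : Set V).ncard, Set.univ, ?_, rfl⟩
    intro v p hp
    cases p with
    | nil => exact hp.ne_nil rfl
    | cons h q => exact h.2.1 (by simp)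
  exact Nat.sInf_mem hne

/-- If a walk in `graphRestrict G S` starts in `F` and ends outside `F`, there is an
edge of the walk leaving `F`, from a vertex `F`-reachable from the start. -/
lemma exitF {G : SimpleGraph V} {S F : Set V} :
    ∀ {x y : V} (q : (graphRestrict G S).Walk x y), y ∉ F → x ∈ F →
    ∃ u₂ w₂, u₂ ∈ F ∧ w₂ ∉ F ∧ (graphRestrict G F).Reachable x u₂ ∧
      (graphRestrict G S).Adj u₂ w₂ ∧ s(u₂, w₂) ∈ q.edges := by
  intro x y q
  induction q with
  | nil => exact fun hy hx => absurd hx hy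
  | @cons a b c hab r ih =>
    intro hy ha
    by_cases hb : b ∈ F
    · obtain ⟨u₂, w₂, hu, hw, hr, hadj, he⟩ := ih hy hb
      refine ⟨u₂, w₂, hu, hw, ?_, hadj, by simp [he]⟩
      exact (SimpleGraph.Adj.reachable
        (show (graphRestrict G F).Adj a b from ⟨hab.1, ha, hb⟩)).trans hr
    · exact ⟨a, b, ha, hb, SimpleGraph.Reachable.refl a, hab, by simp⟩

/-- If a walk in `graphRestrict G S` starts and ends outside `F` but meets `F`, we can
extract an edge entering `F` and a strictly later edge leaving `F`, with the endpoints
inside `F` connected within `F`. -/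
lemma crossF {G : SimpleGraph V} {S F : Set V} :
    ∀ {x y : V} (q : (graphRestrict G S).Walk x y), y ∉ F → x ∉ F →
    (∃ a ∈ q.support, a ∈ F) →
    ∃ u₁ u₂ w₁ w₂, u₁ ∈ F ∧ u₂ ∈ F ∧ (graphRestrict G F).Reachable u₁ u₂ ∧
      w₁ ∉ F ∧ w₂ ∉ F ∧ (graphRestrict G S).Adj w₁ u₁ ∧ (graphRestrict G S).Adj u₂ w₂ ∧
      ∃ l : List (Sym2 V), (s(w₁, u₁) :: l) <:+ q.edges ∧ s(u₂, w₂) ∈ l := by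
  intro x y q
  induction q with
  | nil =>
    rintro hy hx ⟨a, ha, haF⟩
    simp only [SimpleGraph.Walk.support_nil, List.mem_singleton] at ha
    exact absurd (ha ▸ haF) hx
  | @cons a b c hab r ih =>
    rintro hy ha ⟨d, hd, hdF⟩
    by_cases hb : b ∈ F
    · obtain ⟨u₂, w₂, hu, hw, hr, hadj, he⟩ := exitF r hy hb
      refine ⟨b, u₂, a, w₂, hb, hu, hr, ha, hw, hab, hadj, r.edges, ?_, he⟩
      rw [SimpleGraph.Walk.edges_cons]
    · have hd' : d ∈ r.support := by
        rcases (by simpa using hd : d = a ∨ d ∈ r.support) with h' | h'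
        · exact absurd (h' ▸ hdF) ha
        · exact h'
      obtain ⟨u₁, u₂, w₁, w₂, hu₁, hu₂, hr, hw₁, hw₂, hadj₁, hadj₂, l, hsuf, hmem⟩ :=
        ih hy hb ⟨d, hd', hdF⟩
      refine ⟨u₁, u₂, w₁, w₂, hu₁, hu₂, hr, hw₁, hw₂, hadj₁, hadj₂, l, ?_, hmem⟩
      rw [SimpleGraph.Walk.edges_cons]
      exact hsuf.trans (List.suffix_cons _ _)

/-- A cycle through `F` contradicts the single-exit property. -/
lemma cycle_cross_contra {G : SimpleGraph V} {S F : Set V} {v : V}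
    (p : (graphRestrict G S).Walk v v) (hp : p.IsCycle) (hvF : v ∉ F)
    (hsome : ∃ a ∈ p.support, a ∈ F)
    (hkey : ∀ u₁ u₂ w₁ w₂, u₁ ∈ F → u₂ ∈ F → (graphRestrict G F).Reachable u₁ u₂ →
      w₁ ∉ F → w₂ ∉ F → (graphRestrict G S).Adj w₁ u₁ → (graphRestrict G S).Adj u₂ w₂ →
      u₁ = u₂ ∧ w₁ = w₂) : False := by
  obtain ⟨u₁, u₂, w₁, w₂, hu₁, hu₂, hr, hw₁, hw₂, hadj₁, hadj₂, l, hsuf, hmem⟩ :=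
    crossF p hvF hvF hsome
  obtain ⟨he₁, he₂⟩ := hkey u₁ u₂ w₁ w₂ hu₁ hu₂ hr hw₁ hw₂ hadj₁ hadj₂
  subst he₁; subst he₂
  have hnd : (s(w₁, u₁) :: l).Nodup :=
    hsuf.sublist.nodup hp.isCircuit.isTrail.edges_nodup
  exact (List.nodup_cons.mp hnd).1 (Sym2.eq_swap ▸ hmem)

/-- Key lemma: if `(C, F)` is an FVC and `Y` is an FVS of `G - (C ∪ F)`, then
`C ∪ Y` is an FVS of `G`. -/
lemma union_isFVS {G : SimpleGraph V} {C F Y : Set V}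
    (hFVC : IsFVC G C F) (hY : IsFVS (graphRestrict G (C ∪ F)ᶜ) Y) :
    IsFVS G (C ∪ Y) := by
  intro v p hp
  by_cases hall : ∀ a ∈ p.support, a ∈ F
  · exact cycleTransfer (H := graphRestrict G F) p hp
      (fun a b hab hasup hbsup => ⟨hab.1, hall a hasup, hall b hbsup⟩) hFVC.2.1
  · push_neg at hall
    obtain ⟨b0, hb0sup, hb0F⟩ := hall
    by_cases hnone : ∀ a ∈ p.support, a ∉ F
    · refine cycleTransfer (H := graphRestrict (graphRestrict G (C ∪ F)ᶜ) Yᶜ) p hp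
        (fun a b hab ha hb => ?_) hY
      exact ⟨⟨hab.1, fun h' => h'.elim (fun hc => hab.2.1 (Or.inl hc)) (hnone a ha),
          fun h' => h'.elim (fun hc => hab.2.2 (Or.inl hc)) (hnone b hb)⟩,
        fun h' => hab.2.1 (Or.inr h'), fun h' => hab.2.2 (Or.inr h')⟩
    · push_neg at hnone
      obtain ⟨aF, haFsup, haF⟩ := hnone
      have hkey : ∀ u₁ u₂ w₁ w₂, u₁ ∈ F → u₂ ∈ F →
          (graphRestrict G F).Reachable u₁ u₂ → w₁ ∉ F → w₂ ∉ F →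
          (graphRestrict G (C ∪ Y)ᶜ).Adj w₁ u₁ → (graphRestrict G (C ∪ Y)ᶜ).Adj u₂ w₂ →
          u₁ = u₂ ∧ w₁ = w₂ := by
        intro u₁ u₂ w₁ w₂ hu₁ hu₂ hr hw₁ hw₂ hadj₁ hadj₂
        refine hFVC.2.2 u₁ u₂ w₁ w₂ hu₁ hu₂ hr ?_ ?_ hadj₁.1.symm hadj₂.1
        · exact fun h' => h'.elim (fun hc => hadj₁.2.1 (Or.inl hc)) hw₁
        · exact fun h' => h'.elim (fun hc => hadj₂.2.2 (Or.inl hc)) hw₂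
      classical
      by_cases hvF : v ∈ F
      · obtain ⟨w, hvw⟩ : ∃ w, s(v, w) ∈ p.edges := by
          cases p with
          | nil => exact absurd rfl hp.ne_nil
          | cons h q =>
            exact ⟨_, by rw [SimpleGraph.Walk.edges_cons]; exact List.mem_cons_self⟩
        have hv' : v ∈ (p.rotate _ hb0sup).support :=
          (p.rotate _ hb0sup).fst_mem_support_of_mem_edges
            ((p.rotate_edges _ hb0sup).mem_iff.mpr hvw)
        exact cycle_cross_contra (p.rotate _ hb0sup) (hp.rotate hb0sup) hb0F
          ⟨v, hv', hvF⟩ hkey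
      · exact cycle_cross_contra p hp hvF ⟨aF, haFsup, haF⟩ hkey

lemma antler_lower [Fintype V] {G : SimpleGraph V} {C F X : Set V}
    (h : IsAntler G C F) (hX : IsFVS G X) :
    C.ncard + fvs (graphRestrict G (C ∪ F)ᶜ) ≤ X.ncard := by
  have h1 : IsFVS (graphRestrict G (C ∪ F)) (X ∩ (C ∪ F)) := by
    intro v p hp
    refine cycleTransfer (H := graphRestrict G Xᶜ) p hp (fun a b hab _ _ => ?_) hX
    exact ⟨hab.1.1, fun h' => hab.2.1 ⟨h', hab.1.2.1⟩, fun h' => hab.2.2 ⟨h', hab.1.2.2⟩⟩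
  have h2 : IsFVS (graphRestrict G (C ∪ F)ᶜ) (X \ (C ∪ F)) := by
    intro v p hp
    refine cycleTransfer (H := graphRestrict G Xᶜ) p hp (fun a b hab _ _ => ?_) hX
    exact ⟨hab.1.1, fun h' => hab.2.1 ⟨h', hab.1.2.1⟩, fun h' => hab.2.2 ⟨h', hab.1.2.2⟩⟩
  have hC : C.ncard ≤ (X ∩ (C ∪ F)).ncard := h.2.trans (fvs_le_of_isFVS h1)
  have hrest : fvs (graphRestrict G (C ∪ F)ᶜ) ≤ (X \ (C ∪ F)).ncard := fvs_le_of_isFVS h2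
  calc C.ncard + fvs (graphRestrict G (C ∪ F)ᶜ)
      ≤ (X ∩ (C ∪ F)).ncard + (X \ (C ∪ F)).ncard := Nat.add_le_add hC hrest
    _ = X.ncard := Set.ncard_inter_add_ncard_diff_eq_ncard X (C ∪ F)

end AntlerProof

theorem stmt1 [Fintype V] (G : SimpleGraph V) (C F : Set V) (h : IsAntler G C F) :
    fvs G = C.ncard + fvs (graphRestrict G (C ∪ F)ᶜ) := by
  obtain ⟨Y, hY, hYcard⟩ := exists_min_fvs (graphRestrict G (C ∪ F)ᶜ)
  obtain ⟨X, hX, hXcard⟩ := exists_min_fvs G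
  refine le_antisymm ?_ ?_
  · calc fvs G ≤ (C ∪ Y).ncard := fvs_le_of_isFVS (union_isFVS h.1 hY)
      _ ≤ C.ncard + Y.ncard := Set.ncard_union_le _ _
      _ = C.ncard + fvs (graphRestrict G (C ∪ F)ᶜ) := by rw [hYcard]
  · rw [← hXcard]
    exact antler_lower h hX
end

section
/- Let G be a finite simple graph, let (C,F) be an antler in G, and let S' be a minimum feedback vertex set of the graph G − (C ∪ F). Then S' ∪ C is a minimum feedback vertex set of G. In particular, there exists a minimum feedback vertex set of G that contains all of C and no vertex of F. -/
variable {V : Type*}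

open SimpleGraph in
lemma graphRestrict_restrict (G : SimpleGraph V) (A B : Set V) :
    graphRestrict (graphRestrict G A) B = graphRestrict G (A ∩ B) := by
  ext u v
  simp only [graphRestrict, Set.mem_inter_iff]
  tauto

lemma graphRestrict_le_of_subset (G : SimpleGraph V) {A B : Set V} (h : A ⊆ B) :
    graphRestrict G A ≤ graphRestrict G B := by
  intro u v hv
  exact ⟨hv.1, h hv.2.1, h hv.2.2⟩

lemma isAcyclic_mono' {G H : SimpleGraph V} (hle : H ≤ G) (hG : G.IsAcyclic) :
    H.IsAcyclic := by
  intro v c hc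
  exact hG (c.transfer G fun e he =>
    SimpleGraph.edgeSet_mono hle (c.edges_subset_edgeSet he)) (hc.transfer _)

lemma isFVS_restrict (G : SimpleGraph V) (A X : Set V) :
    IsFVS (graphRestrict G A) X ↔ (graphRestrict G (A ∩ Xᶜ)).IsAcyclic := by
  unfold IsFVS
  rw [graphRestrict_restrict]

lemma walk_support_getElem {G : SimpleGraph V} {u v : V} (p : G.Walk u v) :
    ∀ (i : ℕ) (hi : i < p.support.length), p.support[i] = p.getVert i := by
  induction p with
  | nil => intro i hi; simp at hi; subst hi; rfl
  | cons h q ih =>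
    intro i hi
    cases i with
    | zero => simp [SimpleGraph.Walk.getVert_zero]
    | succ m =>
      simp only [SimpleGraph.Walk.support_cons, List.getElem_cons_succ,
        SimpleGraph.Walk.getVert_cons_succ]
      exact ih m (by simp at hi ⊢; omega)

lemma getVert_succ_mem_support_tail {G : SimpleGraph V} {u v : V} (p : G.Walk u v)
    {m : ℕ} (hm : m < p.length) : p.getVert (m + 1) ∈ p.support.tail := by
  have hlt : m < p.support.tail.length := by
    simp [List.length_tail, p.length_support]; omega
  have h1 : p.support.tail[m] = p.getVert (m + 1) := by
    rw [List.getElem_tail]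
    exact walk_support_getElem p (m + 1) (by simp [p.length_support]; omega)
  exact h1 ▸ List.getElem_mem hlt

lemma cycle_getVert_inj {G : SimpleGraph V} {v : V} {c : G.Walk v v} (hc : c.IsCycle)
    {i j : ℕ} (hi : i < c.length) (hj : j < c.length)
    (hg : c.getVert (i + 1) = c.getVert (j + 1)) : i = j := by
  have htl : c.support.tail.length = c.length := by
    simp [List.length_tail, c.length_support]
  have h1 : c.support.tail[i]'(by omega) = c.getVert (i + 1) := by
    rw [List.getElem_tail]
    exact walk_support_getElem c (i + 1) (by simp [c.length_support]; omega)
  have h2 : c.support.tail[j]'(by omega) = c.getVert (j + 1) := by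
    rw [List.getElem_tail]
    exact walk_support_getElem c (j + 1) (by simp [c.length_support]; omega)
  exact (hc.support_nodup.getElem_inj_iff).1 (by rw [h1, h2, hg])

open SimpleGraph Walk in
lemma antler_fvs_acyclic {G : SimpleGraph V} {C F S' : Set V}
    (hF : (graphRestrict G F).IsAcyclic)
    (hcross : ∀ u₁ u₂ w₁ w₂ : V, u₁ ∈ F → u₂ ∈ F →
      (graphRestrict G F).Reachable u₁ u₂ →
      w₁ ∉ C ∪ F → w₂ ∉ C ∪ F → G.Adj u₁ w₁ → G.Adj u₂ w₂ → u₁ = u₂ ∧ w₁ = w₂)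
    (hS : (graphRestrict G ((C ∪ F)ᶜ ∩ S'ᶜ)).IsAcyclic) :
    (graphRestrict G (S' ∪ C)ᶜ).IsAcyclic := by
  classical
  intro v c hc
  by_cases hall : ∀ x ∈ c.support, x ∈ F
  · refine hF (c.transfer (graphRestrict G F) ?_) (hc.transfer _)
    intro e he
    induction e using Sym2.ind with
    | _ a b =>
      have hab : (graphRestrict G (S' ∪ C)ᶜ).Adj a b := c.edges_subset_edgeSet he
      exact (SimpleGraph.mem_edgeSet _).2 ⟨hab.1, hall a (c.fst_mem_support_of_mem_edges he),
        hall b (c.snd_mem_support_of_mem_edges he)⟩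
  · by_cases hnone : ∀ x ∈ c.support, x ∉ F
    · refine hS (c.transfer _ ?_) (hc.transfer _)
      intro e he
      induction e using Sym2.ind with
      | _ a b =>
        have hab : (graphRestrict G (S' ∪ C)ᶜ).Adj a b := c.edges_subset_edgeSet he
        have ha := hab.2.1
        have hb := hab.2.2
        simp only [Set.mem_compl_iff, Set.mem_union, not_or] at ha hb
        refine (SimpleGraph.mem_edgeSet _).2 ⟨hab.1, ⟨?_, ha.1⟩, ⟨?_, hb.1⟩⟩
        · simp only [Set.mem_compl_iff, Set.mem_union, not_or]
          exact ⟨ha.2, hnone a (c.fst_mem_support_of_mem_edges he)⟩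
        · simp only [Set.mem_compl_iff, Set.mem_union, not_or]
          exact ⟨hb.2, hnone b (c.snd_mem_support_of_mem_edges he)⟩
    · push_neg at hall hnone
      obtain ⟨x, hxs, hxF⟩ := hall
      obtain ⟨y, hys, hyF⟩ := hnone
      have hys' : y ∈ (c.rotate x hxs).support := by
        obtain ⟨k, hky, hkl⟩ := Walk.mem_support_iff_exists_getVert.1 hys
        have h3 := hc.three_le_length
        have hk' : ∃ m, 1 ≤ m ∧ m ≤ c.length ∧ c.getVert m = y := by
          rcases Nat.eq_zero_or_pos k with rfl | hk0
          · refine ⟨c.length, by omega, le_rfl, ?_⟩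
            rw [c.getVert_length, ← c.getVert_zero, hky]
          · exact ⟨k, hk0, hkl, hky⟩
        obtain ⟨m, hm1, hmn, hmy⟩ := hk'
        have htail : y ∈ c.support.tail := by
          have := getVert_succ_mem_support_tail c (m := m - 1) (by omega)
          rw [show m - 1 + 1 = m by omega, hmy] at this
          exact this
        exact List.mem_of_mem_tail
          (((Walk.support_rotate c x hxs).perm.mem_iff).2 htail)
      set c' := c.rotate x hxs with hc'def
      have hcy : c'.IsCycle := hc.rotate hxs
      obtain ⟨k, hky, hkl⟩ := Walk.mem_support_iff_exists_getVert.1 hys'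
      set n := c'.length with hn
      set g := c'.getVert with hgdef
      have hn3 : 3 ≤ n := hcy.three_le_length
      have hg0 : g 0 = x := c'.getVert_zero
      have hgn : g n = x := c'.getVert_length
      have hA : (∃ m, g m ∈ F ∧ m ≤ n) := ⟨k, by rwa [hky], hkl⟩
      set A : Set ℕ := {m | g m ∈ F ∧ m ≤ n} with hAdef
      have hAne : A.Nonempty := hA
      set i := sInf A with hidef
      obtain ⟨hiF, hin⟩ : g i ∈ F ∧ i ≤ n := Nat.sInf_mem hAne
      have hi1 : 1 ≤ i := by
        rcases Nat.eq_zero_or_pos i with h0 | h1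
        · exact absurd (h0 ▸ hiF) (hg0 ▸ hxF)
        · exact h1
      have hilt : i < n := by
        rcases Nat.lt_or_ge i n with h | h
        · exact h
        · exact absurd hiF (by rw [show i = n by omega, hgn]; exact hxF)
      have hpred : g (i - 1) ∉ F := by
        intro hmem
        have : i ≤ i - 1 := Nat.sInf_le ⟨hmem, by omega⟩
        omega
      set B : Set ℕ := {m | i ≤ m ∧ g (m + 1) ∉ F} with hBdef
      have hBne : B.Nonempty := ⟨n - 1, by omega, by
        rw [show n - 1 + 1 = n by omega, hgn]; exact hxF⟩
      set j := sInf B with hjdef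
      obtain ⟨hij, hjF⟩ : i ≤ j ∧ g (j + 1) ∉ F := Nat.sInf_mem hBne
      have hjn : j ≤ n - 1 := Nat.sInf_le ⟨by omega, by
        rw [show n - 1 + 1 = n by omega, hgn]; exact hxF⟩
      have hseg : ∀ m, i ≤ m → m ≤ j → g m ∈ F := by
        intro m him hmj
        by_contra hcon
        have hmi : m ≠ i := fun h => hcon (h ▸ hiF)
        have : j ≤ m - 1 := Nat.sInf_le ⟨by omega, by
          rw [show m - 1 + 1 = m by omega]; exact hcon⟩
        omega
      have hreach : ∀ m, i ≤ m → m ≤ j → (graphRestrict G F).Reachable (g i) (g m) := by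
        intro m him
        induction m, him using Nat.le_induction with
        | base => exact fun _ => Reachable.refl _
        | succ m him ih =>
          intro hmj
          have r := ih (by omega)
          have hadj := c'.adj_getVert_succ (i := m) (by omega)
          have adjF : (graphRestrict G F).Adj (g m) (g (m + 1)) :=
            ⟨hadj.1, hseg m him (by omega), hseg (m + 1) (by omega) hmj⟩
          exact r.trans adjF.reachable
      have hadj1 : (graphRestrict G (S' ∪ C)ᶜ).Adj (g (i - 1)) (g i) := by
        have := c'.adj_getVert_succ (i := i - 1) (by omega)
        rwa [show i - 1 + 1 = i by omega] at this
      have hadj2 : (graphRestrict G (S' ∪ C)ᶜ).Adj (g j) (g (j + 1)) :=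
        c'.adj_getVert_succ (by omega)
      have hw1 : g (i - 1) ∉ C ∪ F := by
        have hm := hadj1.2.1
        simp only [Set.mem_compl_iff, Set.mem_union, not_or] at hm ⊢
        exact ⟨hm.2, hpred⟩
      have hw2 : g (j + 1) ∉ C ∪ F := by
        have hm := hadj2.2.2
        simp only [Set.mem_compl_iff, Set.mem_union, not_or] at hm ⊢
        exact ⟨hm.2, hjF⟩
      obtain ⟨hu, hw⟩ := hcross (g i) (g j) (g (i - 1)) (g (j + 1)) hiF
        (hseg j hij le_rfl) (hreach j hij le_rfl) hw1 hw2 hadj1.symm.1 hadj2.1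
      have hijeq : i = j := by
        have := cycle_getVert_inj hcy (i := i - 1) (j := j - 1)
          (by omega) (by omega)
          (by rw [show i - 1 + 1 = i by omega, show j - 1 + 1 = j by omega]; exact hu)
        omega
      rw [← hijeq] at hw
      by_cases h2 : 2 ≤ i
      · have := cycle_getVert_inj hcy (i := i - 2) (j := i)
          (by omega) (by omega)
          (by rw [show i - 2 + 1 = i - 1 by omega]; exact hw)
        omega
      · have hieq : i = 1 := by omega
        have hw' : g n = g (i + 1) := by
          rw [hgn, ← hg0, ← show i - 1 = 0 by omega]; exact hw
        have := cycle_getVert_inj hcy (i := n - 1) (j := i)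
          (by omega) (by omega)
          (by rw [show n - 1 + 1 = n by omega]; exact hw')
        omega


theorem stmt2 [Fintype V] (G : SimpleGraph V) (C F S' : Set V)
    (h : IsAntler G C F) (hS' : IsMinFVS (graphRestrict G (C ∪ F)ᶜ) S') :
    IsMinFVS G (S' ∪ C) ∧ ∃ S : Set V, IsMinFVS G S ∧ C ⊆ S ∧ Disjoint S F := by
  obtain ⟨⟨hdisCF, hFacyc, hcross⟩, hfvsC⟩ := h
  obtain ⟨hS'fvs, hS'min⟩ := hS'
  have hS'dis : Disjoint S' (C ∪ F) := by
    have hsub : S' \ (C ∪ F) ⊆ S' := Set.diff_subset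
    have hfvs'' : IsFVS (graphRestrict G (C ∪ F)ᶜ) (S' \ (C ∪ F)) := by
      rw [isFVS_restrict] at hS'fvs ⊢
      refine isAcyclic_mono' (graphRestrict_le_of_subset G ?_) hS'fvs
      rintro z ⟨hz1, hz2⟩
      refine ⟨hz1, fun hzS => hz2 ⟨hzS, hz1⟩⟩
    have hle := hS'min _ hfvs''
    have heq := Set.eq_of_subset_of_ncard_le hsub hle (Set.toFinite S')
    exact sdiff_eq_left.1 heq
  have hdisS'C : Disjoint S' C := hS'dis.mono_right Set.subset_union_left
  have hdisS'F : Disjoint S' F := hS'dis.mono_right Set.subset_union_right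
  have hfvsSC : IsFVS G (S' ∪ C) := by
    have hS : (graphRestrict G ((C ∪ F)ᶜ ∩ S'ᶜ)).IsAcyclic :=
      (isFVS_restrict G (C ∪ F)ᶜ S').1 hS'fvs
    exact antler_fvs_acyclic hFacyc hcross hS
  have hmin : ∀ Y : Set V, IsFVS G Y → (S' ∪ C).ncard ≤ Y.ncard := by
    intro Y hY
    have hY' : (graphRestrict G Yᶜ).IsAcyclic := hY
    have hY1 : IsFVS (graphRestrict G (C ∪ F)) (Y ∩ (C ∪ F)) := by
      rw [isFVS_restrict]
      refine isAcyclic_mono' (graphRestrict_le_of_subset G ?_) hY'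
      rintro z ⟨hz1, hz2⟩ hzY
      exact hz2 ⟨hzY, hz1⟩
    have hC_le : C.ncard ≤ (Y ∩ (C ∪ F)).ncard :=
      le_trans hfvsC (Nat.sInf_le ⟨Y ∩ (C ∪ F), hY1, rfl⟩)
    have hY2 : IsFVS (graphRestrict G (C ∪ F)ᶜ) (Y \ (C ∪ F)) := by
      rw [isFVS_restrict]
      refine isAcyclic_mono' (graphRestrict_le_of_subset G ?_) hY'
      rintro z ⟨hz1, hz2⟩ hzY
      exact hz2 ⟨hzY, hz1⟩
    have hS'_le : S'.ncard ≤ (Y \ (C ∪ F)).ncard := hS'min _ hY2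
    have hsum : (Y ∩ (C ∪ F)).ncard + (Y \ (C ∪ F)).ncard = Y.ncard :=
      Set.ncard_inter_add_ncard_diff_eq_ncard Y (C ∪ F) (Set.toFinite Y)
    have hunion : (S' ∪ C).ncard = S'.ncard + C.ncard :=
      Set.ncard_union_eq hdisS'C (Set.toFinite _) (Set.toFinite _)
    omega
  exact ⟨⟨hfvsSC, hmin⟩, S' ∪ C, ⟨hfvsSC, hmin⟩, Set.subset_union_right,
    Disjoint.union_left hdisS'F hdisCF⟩
end

section
/- Let G be a finite simple graph, let z ≥ 0 be an integer, let (C,F) be a z-antler in G, and let X ⊆ C. Then (C \ X, F) is a z-antler in the graph G − X. -/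
variable {V : Type*}

open SimpleGraph

lemma walk_transferMap {V₁ V₂ : Type*} {A : SimpleGraph V₁} {B : SimpleGraph V₂} (f : V₁ → V₂) :
    ∀ {a b : V₁} (p : A.Walk a b), (∀ u w, s(u, w) ∈ p.edges → B.Adj (f u) (f w)) →
      ∃ q : B.Walk (f a) (f b),
        q.support = p.support.map f ∧ q.edges = p.edges.map (Sym2.map f) := by
  intro a b p
  induction p with
  | nil => exact fun _ => ⟨.nil, by simp, by simp⟩
  | cons h p ih =>
    intro hadj
    obtain ⟨q, hs, he⟩ := ih fun u w hm => hadj u w (by simp [hm])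
    exact ⟨.cons (hadj _ _ (by simp)) q, by simp [hs], by simp [he, Sym2.map_pair_eq]⟩

lemma no_cycle_transfer {V₁ V₂ : Type*} {A : SimpleGraph V₁} {B : SimpleGraph V₂}
    (hB : B.IsAcyclic) (f : V₁ → V₂) {v : V₁} (p : A.Walk v v) (hp : p.IsCycle)
    (hadj : ∀ u w, s(u, w) ∈ p.edges → B.Adj (f u) (f w))
    (hinj : Set.InjOn f {x | x ∈ p.support}) : False := by
  obtain ⟨q, hs, he⟩ := walk_transferMap f p hadj
  refine hB q (Walk.isCycle_def .. |>.2 ⟨Walk.isTrail_def .. |>.2 ?_, ?_, ?_⟩)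
  · rw [he]
    refine (hp.isTrail.edges_nodup).map_on ?_
    intro e₁ h₁ e₂ h₂ hfe
    induction e₁ using Sym2.ind with | _ a₁ b₁ =>
    induction e₂ using Sym2.ind with | _ a₂ b₂ =>
    rw [Sym2.map_pair_eq, Sym2.map_pair_eq, Sym2.eq_iff] at hfe
    have m₁ := p.fst_mem_support_of_mem_edges h₁
    have m₁' := p.snd_mem_support_of_mem_edges h₁
    have m₂ := p.fst_mem_support_of_mem_edges h₂
    have m₂' := p.snd_mem_support_of_mem_edges h₂
    rcases hfe with ⟨ha, hb⟩ | ⟨ha, hb⟩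
    · rw [hinj m₁ m₂ ha, hinj m₁' m₂' hb]
    · rw [hinj m₁ m₂' ha, hinj m₁' m₂ hb, Sym2.eq_swap]
  · intro hq
    have hpe : p.edges = [] := by
      have := he.symm.trans (congrArg Walk.edges hq)
      simpa using this
    cases p with
    | nil => exact hp.ne_nil rfl
    | cons h p => simp at hpe
  · rw [hs, ← List.map_tail]
    refine (hp.support_nodup).map_on ?_
    intro x hx y hy hxy
    exact hinj (List.mem_of_mem_tail hx) (List.mem_of_mem_tail hy) hxy

lemma exists_mem_edges_of_mem_support {V₁ : Type*} {A : SimpleGraph V₁} :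
    ∀ {a b u : V₁} (p : A.Walk a b), u ∈ p.support → p.length ≠ 0 →
      ∃ w, s(u, w) ∈ p.edges := by
  intro a b u p
  induction p with
  | nil => intro _ h0; simp at h0
  | @cons a c b h q ih =>
    intro hu _
    rw [Walk.support_cons, List.mem_cons] at hu
    rcases hu with rfl | hu
    · exact ⟨c, by simp⟩
    · cases q with
      | nil =>
        simp only [Walk.support_nil, List.mem_singleton] at hu
        subst hu
        exact ⟨a, by simp [Sym2.eq_swap]⟩
      | cons h' q' =>
        obtain ⟨w, hw⟩ := ih hu (by simp)
        exact ⟨w, by rw [Walk.edges_cons]; exact List.mem_cons_of_mem _ hw⟩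

lemma cycle_support_edge {V₁ : Type*} {A : SimpleGraph V₁} {v u : V₁} {p : A.Walk v v}
    (hp : p.IsCycle) (hu : u ∈ p.support) : ∃ w, A.Adj u w := by
  obtain ⟨w, hw⟩ := exists_mem_edges_of_mem_support p hu (by have := hp.three_le_length; omega)
  exact ⟨w, p.adj_of_mem_edges hw⟩

lemma acyclic_transfer {V₁ V₂ : Type*} {A : SimpleGraph V₁} {B : SimpleGraph V₂} (f : V₁ → V₂)
    (hadj : ∀ ⦃u w⦄, A.Adj u w → B.Adj (f u) (f w))
    (hinj : Set.InjOn f {x | ∃ y, A.Adj x y}) (hB : B.IsAcyclic) : A.IsAcyclic := by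
  intro v p hp
  refine no_cycle_transfer hB f p hp (fun u w h => hadj (p.adj_of_mem_edges h)) ?_
  intro x hx y hy hxy
  exact hinj (cycle_support_edge hp hx) (cycle_support_edge hp hy) hxy


lemma isFVS_univ {V : Type*} (A : SimpleGraph V) : IsFVS A Set.univ := by
  intro v p hp
  cases p with
  | nil => exact hp.ne_nil rfl
  | cons h q => exact h.2.1 trivial

lemma fvs_le {V : Type*} {A : SimpleGraph V} {Y : Set V} (h : IsFVS A Y) : fvs A ≤ Y.ncard :=
  Nat.sInf_le ⟨Y, h, rfl⟩

lemma exists_minFVS {V : Type*} (A : SimpleGraph V) : ∃ Y, IsFVS A Y ∧ Y.ncard = fvs A := by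
  have h : fvs A ∈ {n | ∃ X : Set V, IsFVS A X ∧ X.ncard = n} :=
    Nat.sInf_mem ⟨Set.univ.ncard, Set.univ, isFVS_univ A, rfl⟩
  exact h

lemma image_val_sep {V : Type*} {W : Set V} (C : Set V) :
    Subtype.val '' {u : ↥W | (u : V) ∈ C} = C ∩ W := by
  ext x
  constructor
  · rintro ⟨⟨y, hy⟩, hC, rfl⟩; exact ⟨hC, hy⟩
  · rintro ⟨hC, hW⟩; exact ⟨⟨x, hW⟩, hC, rfl⟩

/-- The subgraph of `G - X` obtained from `H` by deleting the vertices of `X`. -/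
def delSub {V : Type*} {G : SimpleGraph V} (H : G.Subgraph) (X : Set V) :
    (graphRestrict G Xᶜ).Subgraph where
  verts := H.verts \ X
  Adj u v := H.Adj u v ∧ u ∉ X ∧ v ∉ X
  adj_sub h := ⟨H.adj_sub h.1, h.2.1, h.2.2⟩
  edge_vert h := ⟨H.edge_vert h.1, h.2.1⟩
  symm := ⟨fun u v h => ⟨H.adj_symm h.1, h.2.2, h.2.1⟩⟩

lemma delSub_isFVS {V : Type*} {G : SimpleGraph V} (H : G.Subgraph) (X C : Set V)
    (hFVS : IsFVS H.coe {u : H.verts | (u : V) ∈ C}) :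
    IsFVS (delSub H X).coe {u : (delSub H X).verts | (u : V) ∈ C \ X} := by
  refine acyclic_transfer (fun u => (⟨u.1, u.2.1⟩ : H.verts)) ?_ ?_ hFVS
  · rintro u w ⟨hA, hu, hw⟩
    exact ⟨hA.1, fun hc => hu ⟨hc, hA.2.1⟩, fun hc => hw ⟨hc, hA.2.2⟩⟩
  · intro x _ y _ hxy
    have h2 := congrArg Subtype.val hxy
    exact Subtype.ext h2

lemma delSub_min {V : Type*} [Fintype V] {G : SimpleGraph V} (H : G.Subgraph) (X C : Set V)
    (hXC : X ⊆ C) (hCW : C ⊆ H.verts)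
    (hmin : ∀ Z : Set ↥H.verts, IsFVS H.coe Z → ({u : H.verts | (u : V) ∈ C}).ncard ≤ Z.ncard)
    (Y : Set ↥(delSub H X).verts) (hY : IsFVS (delSub H X).coe Y) :
    ({u : (delSub H X).verts | (u : V) ∈ C \ X}).ncard ≤ Y.ncard := by
  classical
  have hFVS : IsFVS H.coe {u : ↥H.verts | (u : V) ∈ X ∪ Subtype.val '' Y} := by
    intro b p hp
    obtain ⟨w0, hbw⟩ := cycle_support_edge hp p.start_mem_support
    have hbX : (b : V) ∉ X := fun hx => hbw.2.1 (Or.inl hx)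
    refine no_cycle_transfer hY
      (fun u : ↥H.verts => if h : (u : V) ∈ X then ⟨b, b.2, hbX⟩ else ⟨u, u.2, h⟩) p hp ?_ ?_
    · intro u w he
      have ha := p.adj_of_mem_edges he
      have huX : (u : V) ∉ X := fun hx => ha.2.1 (Or.inl hx)
      have hwX : (w : V) ∉ X := fun hx => ha.2.2 (Or.inl hx)
      simp only [dif_neg huX, dif_neg hwX]
      exact ⟨⟨ha.1, huX, hwX⟩, fun hy => ha.2.1 (Or.inr ⟨_, hy, rfl⟩),
        fun hy => ha.2.2 (Or.inr ⟨_, hy, rfl⟩)⟩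
    · intro x hx y hy hxy
      obtain ⟨wx, hwx⟩ := exists_mem_edges_of_mem_support p hx
        (by have := hp.three_le_length; omega)
      obtain ⟨wy, hwy⟩ := exists_mem_edges_of_mem_support p hy
        (by have := hp.three_le_length; omega)
      have hxX : (x : V) ∉ X := fun h => (p.adj_of_mem_edges hwx).2.1 (Or.inl h)
      have hyX : (y : V) ∉ X := fun h => (p.adj_of_mem_edges hwy).2.1 (Or.inl h)
      simp only [dif_neg hxX, dif_neg hyX] at hxy
      have h2 := congrArg Subtype.val hxy
      exact Subtype.ext h2
  have h1 := hmin _ hFVS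
  have e1 : ({u : ↥H.verts | (u : V) ∈ C}).ncard = C.ncard := by
    rw [← Set.ncard_image_of_injective _ Subtype.val_injective, image_val_sep,
      Set.inter_eq_self_of_subset_left hCW]
  have e2 : ({u : ↥H.verts | (u : V) ∈ X ∪ Subtype.val '' Y}).ncard ≤ X.ncard + Y.ncard := by
    have him : Subtype.val '' {u : ↥H.verts | (u : V) ∈ X ∪ Subtype.val '' Y}
        = X ∪ Subtype.val '' Y := by
      rw [image_val_sep]
      apply Set.inter_eq_self_of_subset_left
      rintro x (h | ⟨y, _, rfl⟩)
      · exact hCW (hXC h)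
      · exact y.2.1
    calc ({u : ↥H.verts | (u : V) ∈ X ∪ Subtype.val '' Y}).ncard
        = (X ∪ Subtype.val '' Y).ncard := by
          rw [← Set.ncard_image_of_injective _ Subtype.val_injective, him]
      _ ≤ X.ncard + (Subtype.val '' Y).ncard := Set.ncard_union_le _ _
      _ = X.ncard + Y.ncard := by rw [Set.ncard_image_of_injective _ Subtype.val_injective]
  have hsub3 : C \ X ⊆ (delSub H X).verts := fun u hu => ⟨hCW hu.1, hu.2⟩
  have e3 : ({u : (delSub H X).verts | (u : V) ∈ C \ X}).ncard = C.ncard - X.ncard := by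
    rw [← Set.ncard_image_of_injective _ Subtype.val_injective, image_val_sep,
      Set.inter_eq_self_of_subset_left hsub3, Set.ncard_diff hXC]
  have e4 : X.ncard ≤ C.ncard := Set.ncard_le_ncard hXC
  omega


lemma delSub_order {V : Type*} [Fintype V] {G : SimpleGraph V} (H : G.Subgraph) (X C : Set V)
    (z : ℕ) (hXC : X ⊆ C) (hCW : C ⊆ H.verts)
    (hFVS' : IsFVS (delSub H X).coe {u : (delSub H X).verts | (u : V) ∈ C \ X})
    (hord : HasCertOrder H.coe {u : H.verts | (u : V) ∈ C} z) :
    HasCertOrder (delSub H X).coe {u : (delSub H X).verts | (u : V) ∈ C \ X} z := by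
  classical
  intro v
  have hvW : (v : V) ∈ H.verts := v.2.1
  set vW : ↥H.verts := ⟨v.1, v.2.1⟩ with hvWdef
  set R' : Set ↥(delSub H X).verts := {u | (delSub H X).coe.Reachable u v} with hR'
  set R : Set ↥H.verts := {u | H.coe.Reachable u vW} with hRdef
  set D' : Set ↥(delSub H X).verts := {u : (delSub H X).verts | (u : V) ∈ C \ X} with hD'
  let inclHom : (delSub H X).coe →g H.coe := ⟨fun u => ⟨u.1, u.2.1⟩, fun h => h.1⟩
  have hR'R : ∀ u : ↥(delSub H X).verts, u ∈ R' → (⟨u.1, u.2.1⟩ : ↥H.verts) ∈ R :=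
    fun u hu => hu.map inclHom
  -- upper bound
  have hup : fvs (graphRestrict (delSub H X).coe R') ≤ (D' ∩ R').ncard := by
    apply fvs_le
    refine acyclic_transfer id ?_ (fun a _ b _ h => h) hFVS'
    rintro u w ⟨⟨ha, hu, hw⟩, hnu, hnw⟩
    exact ⟨ha, fun hd => hnu ⟨hd, hu⟩, fun hd => hnw ⟨hd, hw⟩⟩
  -- z bound
  have hz : (D' ∩ R').ncard ≤ ({u : H.verts | (u : V) ∈ C} ∩ R).ncard := by
    refine Set.ncard_le_ncard_of_injOn (fun u => (⟨u.1, u.2.1⟩ : ↥H.verts)) ?_ ?_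
    · rintro u ⟨hd, hr⟩; exact ⟨hd.1, hR'R u hr⟩
    · intro a _ b _ hab
      have h2 := congrArg Subtype.val hab
      exact Subtype.ext h2
  -- minimum FVS of the component of v in `delSub H X`
  obtain ⟨Y, hY, hYcard⟩ := exists_minFVS (graphRestrict (delSub H X).coe R')
  -- auxiliary acyclic graph
  set T : Set ↥(delSub H X).verts := {u | (u ∈ R' → u ∉ Y) ∧ (u ∉ R' → u ∉ D')} with hT
  have hBacyclic : (graphRestrict (delSub H X).coe T).IsAcyclic := by
    intro b q hq
    have hsupR : ∀ u, u ∈ q.support → (delSub H X).coe.Reachable b u := by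
      intro u hu
      have hr : (graphRestrict (delSub H X).coe T).Reachable b u := ⟨q.takeUntil u hu⟩
      exact Reachable.map
        (⟨id, fun h => h.1⟩ : graphRestrict (delSub H X).coe T →g (delSub H X).coe) hr
    have hsupT : ∀ u, u ∈ q.support → u ∈ T := by
      intro u hu
      obtain ⟨w, hw⟩ := cycle_support_edge hq hu
      exact hw.2.1
    by_cases hbR : b ∈ R'
    · refine no_cycle_transfer hY id q hq ?_ (fun a _ b _ h => h)
      intro u w he
      have ha := q.adj_of_mem_edges he
      have hmu := q.fst_mem_support_of_mem_edges he
      have hmw := q.snd_mem_support_of_mem_edges he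
      have huR : u ∈ R' := ((hsupR u hmu).symm.trans hbR)
      have hwR : w ∈ R' := ((hsupR w hmw).symm.trans hbR)
      exact ⟨⟨ha.1, huR, hwR⟩, (hsupT u hmu).1 huR, (hsupT w hmw).1 hwR⟩
    · refine no_cycle_transfer hFVS' id q hq ?_ (fun a _ b _ h => h)
      intro u w he
      have ha := q.adj_of_mem_edges he
      have hmu := q.fst_mem_support_of_mem_edges he
      have hmw := q.snd_mem_support_of_mem_edges he
      have hu : u ∉ R' := fun h => hbR ((hsupR u hmu).trans h)
      have hw : w ∉ R' := fun h => hbR ((hsupR w hmw).trans h)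
      exact ⟨ha.1, (hsupT u hmu).2 hu, (hsupT w hmw).2 hw⟩
  -- the transferred FVS
  set Y2 : Set ↥H.verts := {u | u ∈ R ∧ ((u : V) ∈ X ∨ (u : V) ∈ Subtype.val '' Y ∨
    ((u : V) ∈ C \ X ∧ (u : V) ∉ Subtype.val '' R'))} with hY2
  have hY2FVS : IsFVS (graphRestrict H.coe R) Y2 := by
    intro b p hp
    have hprop : ∀ u w, s(u, w) ∈ p.edges → (u : V) ∉ X ∧ (u : V) ∉ Subtype.val '' Y ∧
        ¬((u : V) ∈ C \ X ∧ (u : V) ∉ Subtype.val '' R') ∧ u ∈ R := by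
      intro u w he
      have ha := p.adj_of_mem_edges he
      have hu2 : ¬((u : V) ∈ X ∨ (u : V) ∈ Subtype.val '' Y ∨
          ((u : V) ∈ C \ X ∧ (u : V) ∉ Subtype.val '' R')) := fun hor => ha.2.1 ⟨ha.1.2.1, hor⟩
      exact ⟨fun h => hu2 (Or.inl h), fun h => hu2 (Or.inr (Or.inl h)),
        fun h => hu2 (Or.inr (Or.inr h)), ha.1.2.1⟩
    obtain ⟨w0, hw0⟩ := exists_mem_edges_of_mem_support p p.start_mem_support
      (by have := hp.three_le_length; omega)
    have hb := hprop b w0 hw0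
    have hbW' : (b : V) ∈ (delSub H X).verts := ⟨b.2, hb.1⟩
    refine no_cycle_transfer hBacyclic
      (fun u : ↥H.verts => if h : (u : V) ∈ X then ⟨b.1, hbW'⟩ else ⟨u, u.2, h⟩) p hp ?_ ?_
    · intro u w he
      have hu := hprop u w he
      have hw' := hprop w u (by rwa [Sym2.eq_swap] at he)
      have ha := p.adj_of_mem_edges he
      simp only [dif_neg hu.1, dif_neg hw'.1]
      have hmemT : ∀ (a : ↥H.verts) (haX : (a : V) ∉ X),
          (a : V) ∉ Subtype.val '' Y → ¬((a : V) ∈ C \ X ∧ (a : V) ∉ Subtype.val '' R') →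
          (⟨a.1, a.2, haX⟩ : ↥(delSub H X).verts) ∈ T := by
        intro a haX haY haD
        constructor
        · intro _ hYa
          exact haY ⟨_, hYa, rfl⟩
        · intro hnR' hD
          apply hnR'
          have himg : (a : V) ∈ Subtype.val '' R' := by
            by_contra hn
            exact haD ⟨hD, hn⟩
          obtain ⟨y, hy, hyv⟩ := himg
          have hxy : y = (⟨a.1, a.2, haX⟩ : ↥(delSub H X).verts) := Subtype.ext hyv
          rwa [← hxy]
      exact ⟨⟨ha.1.1, hu.1, hw'.1⟩, hmemT u hu.1 hu.2.1 hu.2.2.1,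
        hmemT w hw'.1 hw'.2.1 hw'.2.2.1⟩
    · intro x hx y hy hxy
      obtain ⟨wx, hwx⟩ := exists_mem_edges_of_mem_support p hx
        (by have := hp.three_le_length; omega)
      obtain ⟨wy, hwy⟩ := exists_mem_edges_of_mem_support p hy
        (by have := hp.three_le_length; omega)
      have hxX := (hprop x wx hwx).1
      have hyX := (hprop y wy hwy).1
      simp only [dif_neg hxX, dif_neg hyX] at hxy
      have h2 := congrArg Subtype.val hxy
      exact Subtype.ext h2
  have hle : fvs (graphRestrict H.coe R) ≤ Y2.ncard := fvs_le hY2FVS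
  -- decomposition
  set P1 : Set ↥H.verts := {u | u ∈ R ∧ (u : V) ∈ X} with hP1
  set P2 : Set ↥H.verts := {u | (u : V) ∈ Subtype.val '' Y} with hP2
  set P3 : Set ↥H.verts := {u | u ∈ R ∧ (u : V) ∈ C \ X ∧ (u : V) ∉ Subtype.val '' R'} with hP3
  set P4 : Set ↥H.verts := {u | u ∈ R ∧ (u : V) ∈ C \ X ∧ (u : V) ∈ Subtype.val '' R'} with hP4
  have hsub : Y2 ⊆ P1 ∪ P2 ∪ P3 := by
    rintro u ⟨hr, h | h | h⟩
    · exact Or.inl (Or.inl ⟨hr, h⟩)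
    · exact Or.inl (Or.inr h)
    · exact Or.inr ⟨hr, h⟩
  have hdecomp : {u : H.verts | (u : V) ∈ C} ∩ R = P1 ∪ P4 ∪ P3 := by
    ext u
    constructor
    · rintro ⟨hc, hr⟩
      by_cases hx : (u : V) ∈ X
      · exact Or.inl (Or.inl ⟨hr, hx⟩)
      · by_cases hR2 : (u : V) ∈ Subtype.val '' R'
        · exact Or.inl (Or.inr ⟨hr, ⟨hc, hx⟩, hR2⟩)
        · exact Or.inr ⟨hr, ⟨hc, hx⟩, hR2⟩
    · rintro ((⟨hr, hx⟩ | ⟨hr, hd, _⟩) | ⟨hr, hd, _⟩)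
      · exact ⟨hXC hx, hr⟩
      · exact ⟨hd.1, hr⟩
      · exact ⟨hd.1, hr⟩
  have hc1 : ({u : H.verts | (u : V) ∈ C} ∩ R).ncard = P1.ncard + P4.ncard + P3.ncard := by
    rw [hdecomp, Set.ncard_union_eq ?d1, Set.ncard_union_eq ?d2]
    case d2 =>
      rw [Set.disjoint_left]
      rintro u ⟨_, hx⟩ ⟨_, hd, _⟩
      exact hd.2 hx
    case d1 =>
      rw [Set.disjoint_left]
      rintro u (⟨_, hx⟩ | ⟨_, _, hi⟩) ⟨_, hd3, hni⟩
      · exact hd3.2 hx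
      · exact hni hi
  have hP2card : P2.ncard = Y.ncard := by
    rw [← Set.ncard_image_of_injective P2 Subtype.val_injective,
      ← Set.ncard_image_of_injective Y Subtype.val_injective]
    congr 1
    apply Set.Subset.antisymm
    · rintro x ⟨u, hu, rfl⟩; exact hu
    · rintro x ⟨y, hy, rfl⟩; exact ⟨⟨y.1, y.2.1⟩, ⟨y, hy, rfl⟩, rfl⟩
  have hP4card : P4.ncard = (D' ∩ R').ncard := by
    rw [← Set.ncard_image_of_injective P4 Subtype.val_injective,
      ← Set.ncard_image_of_injective (D' ∩ R') Subtype.val_injective]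
    congr 1
    apply Set.Subset.antisymm
    · rintro x ⟨u, ⟨hr, hd, hR2⟩, rfl⟩
      obtain ⟨y, hy, hyv⟩ := hR2
      refine ⟨y, ⟨?_, hy⟩, hyv⟩
      show (y : V) ∈ C \ X
      rw [hyv]; exact hd
    · rintro x ⟨y, ⟨hd, hr'⟩, rfl⟩
      exact ⟨⟨y.1, y.2.1⟩, ⟨hR'R y hr', hd, ⟨y, hr', rfl⟩⟩, rfl⟩
  have hY2le : Y2.ncard ≤ P1.ncard + P2.ncard + P3.ncard := by
    refine le_trans (Set.ncard_le_ncard hsub) (le_trans (Set.ncard_union_le _ _) ?_)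
    exact add_le_add_left (Set.ncard_union_le _ _) _
  have hfin := hord vW
  rw [← hRdef] at hfin
  refine ⟨le_antisymm hup ?_, le_trans hz hfin.2⟩
  rw [← hYcard]
  omega


theorem stmt3 [Fintype V] (G : SimpleGraph V) (z : ℕ) (C F X : Set V)
    (h : IsZAntler G z C F) (hX : X ⊆ C) :
    IsZAntler (graphRestrict G Xᶜ) z (C \ X) F := by
  obtain ⟨⟨⟨hdisj, hforest, htree⟩, hcard⟩, H, hHsub, ⟨hCW, hminF, hminM⟩, hord⟩ := h
  refine ⟨⟨⟨hdisj.mono_left Set.diff_subset, ?_, ?_⟩, ?_⟩,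
    ⟨delSub H X, ?_, ⟨⟨?_, ?_, ?_⟩, ?_⟩⟩⟩
  · refine acyclic_transfer id ?_ (fun a _ b _ h => h) hforest
    rintro u w ⟨⟨ha, _, _⟩, hu, hw⟩
    exact ⟨ha, hu, hw⟩
  · intro u₁ u₂ w₁ w₂ hu₁ hu₂ hre hw₁ hw₂ ha₁ ha₂
    refine htree u₁ u₂ w₁ w₂ hu₁ hu₂ ?_ ?_ ?_ ha₁.1 ha₂.1
    · exact Reachable.map
        (⟨id, fun h => ⟨h.1.1, h.2⟩⟩ :
          graphRestrict (graphRestrict G Xᶜ) F →g graphRestrict G F) hre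
    · rintro (hc | hf)
      · exact hw₁ (Or.inl ⟨hc, ha₁.2.2⟩)
      · exact hw₁ (Or.inr hf)
    · rintro (hc | hf)
      · exact hw₂ (Or.inl ⟨hc, ha₂.2.2⟩)
      · exact hw₂ (Or.inr hf)
  · obtain ⟨Y, hY, hYcard⟩ :=
      exists_minFVS (graphRestrict (graphRestrict G Xᶜ) ((C \ X) ∪ F))
    have hfvs2 : IsFVS (graphRestrict G (C ∪ F)) (Y ∪ X) := by
      refine acyclic_transfer id ?_ (fun a _ b _ h => h) hY
      rintro u w ⟨⟨ha, hu, hw⟩, hnu, hnw⟩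
      have hu' : u ∉ X := fun hh => hnu (Or.inr hh)
      have hw' : w ∉ X := fun hh => hnw (Or.inr hh)
      refine ⟨⟨⟨ha, hu', hw'⟩, ?_, ?_⟩, fun hh => hnu (Or.inl hh), fun hh => hnw (Or.inl hh)⟩
      · rcases hu with hc | hf
        exacts [Or.inl ⟨hc, hu'⟩, Or.inr hf]
      · rcases hw with hc | hf
        exacts [Or.inl ⟨hc, hw'⟩, Or.inr hf]
    have h2 : fvs (graphRestrict G (C ∪ F)) ≤ (Y ∪ X).ncard := fvs_le hfvs2
    have h3 : (Y ∪ X).ncard ≤ Y.ncard + X.ncard := Set.ncard_union_le _ _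
    have h4 : (C \ X).ncard = C.ncard - X.ncard := Set.ncard_diff hX
    have h5 : X.ncard ≤ C.ncard := Set.ncard_le_ncard hX
    omega
  · rintro u ⟨huW, huX⟩
    rcases hHsub huW with hc | hf
    exacts [Or.inl ⟨hc, huX⟩, Or.inr hf]
  · intro u hu
    exact ⟨hCW hu.1, hu.2⟩
  · exact delSub_isFVS H X C hminF
  · exact fun Y hY => delSub_min H X C hX hCW hminM Y hY
  · exact delSub_order H X C z hX hCW (delSub_isFVS H X C hminF) hord
end

section
/- Let G be a finite simple graph in which every vertex has degree at least 3, and let (C,F) be a feedback vertex cut in G. Then |F| ≤ e(C,F), where e(C,F) denotes the number of edges of G with one endpoint in C and the other endpoint in F. -/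
variable {V : Type*}

section AntlerHelpers

open SimpleGraph

/-- A chosen representative (root) of the connected component of `u` in `H`. -/
noncomputable def groot (H : SimpleGraph V) (u : V) : V :=
  (H.connectedComponentMk u).out

lemma groot_reachable (H : SimpleGraph V) (u : V) : H.Reachable u (groot H u) :=
  (SimpleGraph.ConnectedComponent.eq.mp ((H.connectedComponentMk u).out_eq)).symm

lemma groot_eq_of_reachable {H : SimpleGraph V} {u v : V} (h : H.Reachable u v) :
    groot H u = groot H v := by
  unfold groot
  rw [SimpleGraph.ConnectedComponent.sound h]

lemma reachable_of_groot_eq {H : SimpleGraph V} {u v : V} (h : groot H u = groot H v) :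
    H.Reachable u v :=
  ((groot_reachable H u).trans (h ▸ (groot_reachable H v).symm))

lemma groot_idem (H : SimpleGraph V) (u : V) : groot H (groot H u) = groot H u :=
  (groot_eq_of_reachable (groot_reachable H u)).symm

/-- The chosen path from `u` to the root of its component. -/
noncomputable def gpath [DecidableEq V] (H : SimpleGraph V) (u : V) : H.Path u (groot H u) :=
  (groot_reachable H u).some.toPath

/-- The parent of `u`: the second vertex on the chosen path from `u` to its root. -/
noncomputable def gparent [DecidableEq V] (H : SimpleGraph V) (u : V) : V :=
  (gpath H u).1.getVert 1

lemma gparent_of_self_root [DecidableEq V] {H : SimpleGraph V} {u : V} (h : groot H u = u) :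
    gparent H u = u := by
  have hp : ((gpath H u).1.copy rfl h).IsPath :=
    (SimpleGraph.Walk.isPath_copy _ rfl h).mpr (gpath H u).2
  have hnil : ((gpath H u).1.copy rfl h) = SimpleGraph.Path.nil.1 := by
    have := SimpleGraph.Path.loop_eq (G := H) (v := u) ⟨(gpath H u).1.copy rfl h, hp⟩
    exact congrArg Subtype.val this
  have hlen : (gpath H u).1.length = 0 := by
    have := congrArg SimpleGraph.Walk.length hnil
    simpa using this
  have := (gpath H u).1.getVert_of_length_le (i := 1) (by omega)
  rw [gparent, this, h]

/-- In an acyclic graph, for any edge `uv`, either `v` is the parent of `u` or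
`u` is the parent of `v`. -/
lemma gparent_dichotomy [DecidableEq V] {H : SimpleGraph V} (hac : H.IsAcyclic) {u v : V}
    (h : H.Adj u v) : gparent H u = v ∨ gparent H v = u := by
  have huniq := SimpleGraph.isAcyclic_iff_path_unique.mp hac
  have hr : groot H u = groot H v := groot_eq_of_reachable h.reachable
  set p : H.Walk u (groot H u) := (gpath H u).1 with hpdef
  set q : H.Walk v (groot H v) := (gpath H v).1 with hqdef
  have hp : p.IsPath := (gpath H u).2
  have hq : q.IsPath := (gpath H v).2
  by_cases hu : u ∈ q.support
  · by_cases hv : v ∈ p.support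
    · -- contradiction: u appears twice in p
      exfalso
      have hdropP : (p.dropUntil v hv).IsPath := hp.dropUntil hv
      have hEq : (⟨q.copy rfl hr.symm, (SimpleGraph.Walk.isPath_copy _ rfl hr.symm).mpr hq⟩ :
          H.Path v (groot H u)) = ⟨p.dropUntil v hv, hdropP⟩ := huniq _ _
      have hEq' : q.copy rfl hr.symm = p.dropUntil v hv := congrArg Subtype.val hEq
      have huDrop : u ∈ (p.dropUntil v hv).support := by
        rw [← hEq', SimpleGraph.Walk.support_copy]; exact hu
      have hnodup : p.support.Nodup := hp.support_nodup
      rw [← SimpleGraph.Walk.take_spec p hv, SimpleGraph.Walk.support_append] at hnodup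
      have hdisj := List.disjoint_of_nodup_append hnodup
      have huTake : u ∈ (p.takeUntil v hv).support := SimpleGraph.Walk.start_mem_support _
      have huTail : u ∈ (p.dropUntil v hv).support.tail := by
        have := SimpleGraph.Walk.support_eq_cons (p.dropUntil v hv)
        rw [this] at huDrop
        rcases List.mem_cons.mp huDrop with h1 | h1
        · exact absurd h1 h.ne
        · exact h1
      exact hdisj huTake huTail
    · -- cons h.symm p is a path from v to groot, equals q
      right
      have hcons : (SimpleGraph.Walk.cons h.symm p).IsPath :=
        ((SimpleGraph.Walk.cons_isPath_iff h.symm p).mpr ⟨hp, hv⟩)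
      have hEq : (⟨q.copy rfl hr.symm, (SimpleGraph.Walk.isPath_copy _ rfl hr.symm).mpr hq⟩ :
          H.Path v (groot H u)) = ⟨SimpleGraph.Walk.cons h.symm p, hcons⟩ := huniq _ _
      have hEq' : q.copy rfl hr.symm = SimpleGraph.Walk.cons h.symm p :=
        congrArg Subtype.val hEq
      have : (q.copy rfl hr.symm).getVert 1 = u := by
        rw [hEq']
        simpa using SimpleGraph.Walk.getVert_cons_succ (n := 0) p h.symm ▸
          (SimpleGraph.Walk.getVert_zero p)
      rw [SimpleGraph.Walk.getVert_copy] at this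
      exact this
  · -- cons h q is a path from u to groot, equals p
    left
    have hcons : (SimpleGraph.Walk.cons h q).IsPath :=
      ((SimpleGraph.Walk.cons_isPath_iff h q).mpr ⟨hq, hu⟩)
    have hEq : (⟨p.copy rfl hr, (SimpleGraph.Walk.isPath_copy _ rfl hr).mpr hp⟩ :
        H.Path u (groot H v)) = ⟨SimpleGraph.Walk.cons h q, hcons⟩ := huniq _ _
    have hEq' : p.copy rfl hr = SimpleGraph.Walk.cons h q := congrArg Subtype.val hEq
    have : (p.copy rfl hr).getVert 1 = v := by
      rw [hEq']
      simpa using SimpleGraph.Walk.getVert_cons_succ (n := 0) q h ▸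
        (SimpleGraph.Walk.getVert_zero q)
    rw [SimpleGraph.Walk.getVert_copy] at this
    exact this

lemma graphRestrict_mem_of_reachable {G : SimpleGraph V} {S : Set V} {u v : V}
    (h : (graphRestrict G S).Reachable u v) (hu : u ∈ S) : v ∈ S := by
  obtain ⟨w⟩ := h
  induction w with
  | nil => exact hu
  | cons hadj _ ih => exact ih hadj.2.2

end AntlerHelpers

theorem stmt11 [Fintype V] (G : SimpleGraph V) (C F : Set V)
    (hdeg : ∀ v : V, 3 ≤ {u | G.Adj v u}.ncard) (h : IsFVC G C F) :
    F.ncard ≤ {p : V × V | p.1 ∈ C ∧ p.2 ∈ F ∧ G.Adj p.1 p.2}.ncard := by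
  classical
  set H : SimpleGraph V := graphRestrict G F with hHdef
  obtain ⟨hdisj, hac, hfvc⟩ := h
  have hHadj : ∀ {a b : V}, H.Adj a b ↔ G.Adj a b ∧ a ∈ F ∧ b ∈ F := by
    intro a b; rfl
  -- root of a component of H starting in F stays in F
  have hrootF : ∀ u ∈ F, groot H u ∈ F := fun u hu =>
    graphRestrict_mem_of_reachable (groot_reachable H u) hu
  -- Finsets
  set F' : Finset V := Set.toFinset F with hF'def
  set E' : Finset (V × V) :=
    Finset.univ.filter (fun p => p.1 ∈ C ∧ p.2 ∈ F ∧ G.Adj p.1 p.2) with hE'def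
  set D' : Finset (V × V) :=
    Finset.univ.filter (fun p => p.1 ∈ F ∧ p.2 ∈ C ∧ G.Adj p.1 p.2) with hD'def
  set AB : Finset (V × V) :=
    Finset.univ.filter (fun p => p.1 ∈ F ∧ p.2 ∉ C ∧ G.Adj p.1 p.2) with hABdef
  set N : Finset (V × V) :=
    Finset.univ.filter (fun p => p.1 ∈ F ∧ G.Adj p.1 p.2) with hNdef
  -- cardinalities as ncard
  have hFcard : F.ncard = F'.card := Set.ncard_eq_toFinset_card' F
  have hEcard : {p : V × V | p.1 ∈ C ∧ p.2 ∈ F ∧ G.Adj p.1 p.2}.ncard = E'.card := by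
    rw [Set.ncard_eq_toFinset_card']
    congr 1
    ext p
    simp [hE'def]
  -- Step A : 3 * F'.card ≤ N.card
  have hstepA : 3 * F'.card ≤ N.card := by
    have hN : N = F'.biUnion (fun v =>
        (G.neighborFinset v).map ⟨fun x => (v, x), fun a b hab => by
          simpa using hab⟩) := by
      ext p
      simp only [hNdef, Finset.mem_filter, Finset.mem_univ, true_and, Finset.mem_biUnion,
        Finset.mem_map, SimpleGraph.mem_neighborFinset, Function.Embedding.coeFn_mk,
        hF'def, Set.mem_toFinset]
      constructor
      · rintro ⟨h1, h2⟩
        exact ⟨p.1, h1, p.2, h2, rfl⟩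
      · rintro ⟨v, hv, x, hx, rfl⟩
        exact ⟨hv, hx⟩
    rw [hN, Finset.card_biUnion]
    · calc 3 * F'.card = ∑ _v ∈ F', 3 := by
            rw [Finset.sum_const, smul_eq_mul, mul_comm]
          _ ≤ ∑ v ∈ F', ((G.neighborFinset v).map _).card := by
            apply Finset.sum_le_sum
            intro v _
            rw [Finset.card_map]
            have := hdeg v
            rw [Set.ncard_eq_toFinset_card'] at this
            have hset : Set.toFinset {u | G.Adj v u} = G.neighborFinset v := by
              ext x; simp [Set.mem_toFinset]
            rwa [hset] at this
    · intro a _ b _ hab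
      simp only [Finset.disjoint_left, Finset.mem_map, Function.Embedding.coeFn_mk]
      rintro p ⟨x, _, rfl⟩ ⟨y, _, h2⟩
      exact hab (congrArg Prod.fst h2).symm
  -- Step B : N ⊆ AB ∪ D'
  have hstepB : N.card ≤ AB.card + D'.card := by
    have hsub : N ⊆ AB ∪ D' := by
      intro p hp
      simp only [hNdef, Finset.mem_filter, Finset.mem_univ, true_and] at hp
      simp only [Finset.mem_union, hABdef, hD'def, Finset.mem_filter, Finset.mem_univ, true_and]
      by_cases hc : p.2 ∈ C
      · exact Or.inr ⟨hp.1, hc, hp.2⟩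
      · exact Or.inl ⟨hp.1, hc, hp.2⟩
    exact le_trans (Finset.card_le_card hsub) (Finset.card_union_le _ _)
  -- Step C : AB.card ≤ 2 * F'.card
  have hstepC : AB.card ≤ 2 * F'.card := by
    set Φ : V × V → V × Bool := fun p =>
      if p.2 ∈ F then
        (if p.2 = gparent H p.1 then (p.1, false) else (p.2, true))
      else (groot H p.1, true) with hΦdef
    have hmem : ∀ p ∈ AB, p.1 ∈ F ∧ p.2 ∉ C ∧ G.Adj p.1 p.2 := by
      intro p hp
      simpa [hABdef] using hp
    -- maps into F' ×ˢ univ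
    have hmaps : ∀ p ∈ AB, Φ p ∈ F' ×ˢ (Finset.univ : Finset Bool) := by
      intro p hp
      obtain ⟨h1, h2, h3⟩ := hmem p hp
      simp only [hΦdef, Finset.mem_product, Finset.mem_univ, and_true, hF'def,
        Set.mem_toFinset]
      by_cases hf : p.2 ∈ F
      · rw [if_pos hf]
        by_cases hpar : p.2 = gparent H p.1
        · rw [if_pos hpar]; exact h1
        · rw [if_neg hpar]; exact hf
      · rw [if_neg hf]
        exact hrootF p.1 h1
    -- key facts
    have hdich : ∀ {a b : V}, a ∈ F → b ∈ F → G.Adj a b →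
        gparent H a = b ∨ gparent H b = a := by
      intro a b ha hb hadj
      exact gparent_dichotomy hac (hHadj.mpr ⟨hadj, ha, hb⟩)
    have hinj : Set.InjOn Φ AB := by
      intro p hp q hq hpq
      obtain ⟨hp1, hp2, hp3⟩ := hmem p (by exact_mod_cast hp)
      obtain ⟨hq1, hq2, hq3⟩ := hmem q (by exact_mod_cast hq)
      simp only [hΦdef] at hpq
      by_cases hpf : p.2 ∈ F <;> by_cases hqf : q.2 ∈ F
      · -- both in F
        rw [if_pos hpf, if_pos hqf] at hpq
        by_cases hpp : p.2 = gparent H p.1 <;> by_cases hqp : q.2 = gparent H q.1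
        · rw [if_pos hpp, if_pos hqp] at hpq
          have h1 : p.1 = q.1 := (Prod.mk.inj hpq).1
          have : p.2 = q.2 := by rw [hpp, hqp, h1]
          exact Prod.ext h1 this
        · rw [if_pos hpp, if_neg hqp] at hpq
          simpa using (Prod.mk.inj hpq).2
        · rw [if_neg hpp, if_pos hqp] at hpq
          simpa using (Prod.mk.inj hpq).2
        · rw [if_neg hpp, if_neg hqp] at hpq
          have h2 : p.2 = q.2 := (Prod.mk.inj hpq).1
          have hgp : gparent H p.2 = p.1 :=
            (hdich hp1 hpf hp3).resolve_left (fun hh => hpp hh.symm)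
          have hgq : gparent H q.2 = q.1 :=
            (hdich hq1 hqf hq3).resolve_left (fun hh => hqp hh.symm)
          have h1 : p.1 = q.1 := by rw [← hgp, ← hgq, h2]
          exact Prod.ext h1 h2
      · -- p in F branch, q outside
        exfalso
        rw [if_pos hpf, if_neg hqf] at hpq
        by_cases hpp : p.2 = gparent H p.1
        · rw [if_pos hpp] at hpq
          simpa using (Prod.mk.inj hpq).2
        · rw [if_neg hpp] at hpq
          have h2 : p.2 = groot H q.1 := (Prod.mk.inj hpq).1
          have hgp : gparent H p.2 = p.1 :=
            (hdich hp1 hpf hp3).resolve_left (fun hh => hpp hh.symm)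
          have hroot : groot H p.2 = p.2 := by
            rw [h2]; exact groot_idem H q.1
          have : gparent H p.2 = p.2 := gparent_of_self_root hroot
          rw [hgp] at this
          exact (hHadj.mpr ⟨hp3, hp1, hpf⟩).ne this
      · -- q in F branch, p outside
        exfalso
        rw [if_neg hpf, if_pos hqf] at hpq
        by_cases hqp : q.2 = gparent H q.1
        · rw [if_pos hqp] at hpq
          simpa using (Prod.mk.inj hpq).2
        · rw [if_neg hqp] at hpq
          have h2 : q.2 = groot H p.1 := ((Prod.mk.inj hpq).1).symm
          have hgq : gparent H q.2 = q.1 :=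
            (hdich hq1 hqf hq3).resolve_left (fun hh => hqp hh.symm)
          have hroot : groot H q.2 = q.2 := by
            rw [h2]; exact groot_idem H p.1
          have : gparent H q.2 = q.2 := gparent_of_self_root hroot
          rw [hgq] at this
          exact (hHadj.mpr ⟨hq3, hq1, hqf⟩).ne this
      · -- both outside
        rw [if_neg hpf, if_neg hqf] at hpq
        have hroots : groot H p.1 = groot H q.1 := (Prod.mk.inj hpq).1
        have hreach : H.Reachable p.1 q.1 := reachable_of_groot_eq hroots
        have hw1 : p.2 ∉ C ∪ F := by
          intro hmem'
          rcases hmem' with hc | hf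
          · exact hp2 hc
          · exact hpf hf
        have hw2 : q.2 ∉ C ∪ F := by
          intro hmem'
          rcases hmem' with hc | hf
          · exact hq2 hc
          · exact hqf hf
        obtain ⟨he1, he2⟩ := hfvc p.1 q.1 p.2 q.2 hp1 hq1 hreach hw1 hw2 hp3 hq3
        exact Prod.ext he1 he2
    calc AB.card ≤ (F' ×ˢ (Finset.univ : Finset Bool)).card :=
          Finset.card_le_card_of_injOn Φ hmaps hinj
      _ = 2 * F'.card := by
          rw [Finset.card_product]
          simp [mul_comm]
  -- Step D : D'.card = E'.card
  have hstepD : D'.card = E'.card := by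
    have : E' = D'.image Prod.swap := by
      ext p
      simp only [hE'def, hD'def, Finset.mem_filter, Finset.mem_univ, true_and,
        Finset.mem_image]
      constructor
      · rintro ⟨h1, h2, h3⟩
        exact ⟨(p.2, p.1), ⟨h2, h1, h3.symm⟩, rfl⟩
      · rintro ⟨q, ⟨h1, h2, h3⟩, rfl⟩
        exact ⟨h2, h1, h3.symm⟩
    rw [this, Finset.card_image_of_injective _ Prod.swap_injective]
  rw [hFcard, hEcard]
  omega
end
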